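/- Let $M$ be a matroid with ground set $E$, $\psi\colon E\to\Gamma$ a labeling to an abelian group, and $F\subseteq\Gamma$ finite. Suppose that for every basis $A$ of $M$ there exists an $F$-avoiding basis $B$ (i.e., $\psi(B)\notin F$) with $|A\setminus B|\le |F|$, provided an $F$-avoiding basis exists. Then, if $M$ has at least one $F$-avoiding basis, the number of $F$-avoiding bases of $M$ is at least $|\mathcal{B}|/\sum_{i=0}^{|F|}\binom{r}{i}\binom{n-r}{i}$, where $\mathcal{B}$ is the basis family of $M$, $r$ its rank, and $n=|E|$. -/

import Mathlib

private lemma count_close {α : Type*} [DecidableEq α] (E t : Finset α) (ht : t ⊆ E) (k r : ℕ)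
    (htc : t.card = r)
    (S : Finset (Finset α)) (hS : ∀ s ∈ S, s ⊆ E ∧ s.card = r ∧ (s \ t).card ≤ k) :
    S.card ≤ ∑ i ∈ Finset.range (k+1), r.choose i * (E.card - r).choose i := by
  classical
  set T : Finset (Finset α × Finset α) :=
    (Finset.range (k+1)).biUnion (fun i => (t.powersetCard i) ×ˢ ((E \ t).powersetCard i)) with hT
  have hinj : Set.InjOn (fun s => (t \ s, s \ t)) S := by
    intro s1 h1 s2 h2 h
    simp only [Prod.mk.injEq] at h
    ext a
    by_cases hat : a ∈ t
    · have := Finset.ext_iff.mp h.1 a; simp only [Finset.mem_sdiff, hat, true_and] at this; tauto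
    · have := Finset.ext_iff.mp h.2 a; simp only [Finset.mem_sdiff, hat, and_true] at this; tauto
  have hmap : ∀ s ∈ S, (t \ s, s \ t) ∈ T := by
    intro s hs
    obtain ⟨hsE, hsc, hsk⟩ := hS s hs
    have hcard : (t \ s).card = (s \ t).card := by
      have h1 := Finset.card_sdiff_add_card_inter s t
      have h2 := Finset.card_sdiff_add_card_inter t s
      rw [Finset.inter_comm] at h2
      omega
    simp only [hT, Finset.mem_biUnion, Finset.mem_range, Finset.mem_product,
      Finset.mem_powersetCard]
    exact ⟨(s \ t).card, by omega, ⟨Finset.sdiff_subset, hcard⟩,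
      ⟨Finset.sdiff_subset_sdiff hsE le_rfl, rfl⟩⟩
  calc S.card ≤ T.card := Finset.card_le_card_of_injOn _ hmap hinj
    _ ≤ ∑ i ∈ Finset.range (k+1), ((t.powersetCard i) ×ˢ ((E \ t).powersetCard i)).card :=
      Finset.card_biUnion_le
    _ = ∑ i ∈ Finset.range (k+1), r.choose i * (E.card - r).choose i := by
      refine Finset.sum_congr rfl fun i _ => ?_
      rw [Finset.card_product, Finset.card_powersetCard, Finset.card_powersetCard,
        Finset.card_sdiff_of_subset ht, htc]

theorem stmt_16 {α Γ : Type*} [AddCommGroup Γ] (M : Matroid α) (hfin : M.E.Finite)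
    (ψ : α → Γ) (F : Finset Γ) (r : ℕ) (hr : ∀ B, M.IsBase B → B.ncard = r)
    (hprox : (∃ B, M.IsBase B ∧ (∑ᶠ e ∈ B, ψ e) ∉ F) →
      ∀ A, M.IsBase A → ∃ B, M.IsBase B ∧ (∑ᶠ e ∈ B, ψ e) ∉ F ∧ (A \ B).ncard ≤ F.card)
    (hex : ∃ B, M.IsBase B ∧ (∑ᶠ e ∈ B, ψ e) ∉ F) :
    ({B : Set α | M.IsBase B ∧ (∑ᶠ e ∈ B, ψ e) ∉ F}.ncard : ℝ) ≥
      ({B : Set α | M.IsBase B}.ncard : ℝ) /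
        ∑ i ∈ Finset.range (F.card + 1),
          (r.choose i : ℝ) * ((M.E.ncard - r).choose i : ℝ) := by
  classical
  set E : Finset α := hfin.toFinset with hE
  have hEcard : E.card = M.E.ncard := (Set.ncard_eq_toFinset_card _ hfin).symm
  -- the map from sets to finsets
  set g : Set α → Finset α := fun B => E.filter (· ∈ B) with hg
  have hgcoe : ∀ B : Set α, B ⊆ M.E → (↑(g B) : Set α) = B := by
    intro B hB
    ext a
    simp only [hg, Finset.coe_filter, Set.mem_setOf_eq, Set.Finite.mem_toFinset, hE]
    exact ⟨fun h => h.2, fun h => ⟨hB h, h⟩⟩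
  set 𝓑 : Finset (Finset α) := E.powerset.filter (fun s => M.IsBase (↑s : Set α)) with h𝓑
  set 𝓐 : Finset (Finset α) := 𝓑.filter (fun s => (∑ e ∈ s, ψ e) ∉ F) with h𝓐
  -- identification of cardinalities
  have hsetB : {B : Set α | M.IsBase B} = ↑(𝓑.image (fun s : Finset α => (↑s : Set α))) := by
    ext B
    simp only [Set.mem_setOf_eq, Finset.coe_image, Set.mem_image, Finset.mem_coe, h𝓑,
      Finset.mem_filter, Finset.mem_powerset]
    constructor
    · intro hB
      refine ⟨g B, ⟨Finset.filter_subset _ _, ?_⟩, hgcoe B hB.subset_ground⟩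
      rwa [hgcoe B hB.subset_ground]
    · rintro ⟨s, ⟨-, hs⟩, rfl⟩; exact hs
  have hsetA : {B : Set α | M.IsBase B ∧ (∑ᶠ e ∈ B, ψ e) ∉ F} =
      ↑(𝓐.image (fun s : Finset α => (↑s : Set α))) := by
    ext B
    simp only [Set.mem_setOf_eq, Finset.coe_image, Set.mem_image, Finset.mem_coe, h𝓐, h𝓑,
      Finset.mem_filter, Finset.mem_powerset]
    constructor
    · intro hB
      refine ⟨g B, ⟨⟨Finset.filter_subset _ _, ?_⟩, ?_⟩, hgcoe B hB.1.subset_ground⟩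
      · rw [hgcoe B hB.1.subset_ground]; exact hB.1
      · rw [← finsum_mem_coe_finset, hgcoe B hB.1.subset_ground]; exact hB.2
    · rintro ⟨s, ⟨⟨-, hs⟩, hs2⟩, rfl⟩
      rw [finsum_mem_coe_finset]
      exact ⟨hs, hs2⟩
  have hcardB : {B : Set α | M.IsBase B}.ncard = 𝓑.card := by
    rw [hsetB, Set.ncard_coe_finset, Finset.card_image_of_injective _ Finset.coe_injective]
  have hcardA : {B : Set α | M.IsBase B ∧ (∑ᶠ e ∈ B, ψ e) ∉ F}.ncard = 𝓐.card := by
    rw [hsetA, Set.ncard_coe_finset, Finset.card_image_of_injective _ Finset.coe_injective]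
  -- facts about members of 𝓑
  have hmem𝓑 : ∀ s ∈ 𝓑, s ⊆ E ∧ s.card = r ∧ M.IsBase (↑s : Set α) := by
    intro s hs
    simp only [h𝓑, Finset.mem_filter, Finset.mem_powerset] at hs
    refine ⟨hs.1, ?_, hs.2⟩
    have := hr _ hs.2
    rwa [Set.ncard_coe_finset] at this
  -- the proximity map
  have hp := hprox hex
  set f : Finset α → Finset α := fun s =>
    if h : M.IsBase (↑s : Set α) then g (hp _ h).choose else ∅ with hf
  have hfspec : ∀ s ∈ 𝓑, f s ∈ 𝓐 ∧ ((↑s : Set α) \ ↑(f s)).ncard ≤ F.card := by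
    intro s hs
    obtain ⟨hsE, hsc, hsb⟩ := hmem𝓑 s hs
    have hch := (hp _ hsb).choose_spec
    have hco : (↑(g (hp _ hsb).choose) : Set α) = (hp _ hsb).choose :=
      hgcoe _ hch.1.subset_ground
    have hfs : f s = g (hp _ hsb).choose := by simp [hf, hsb]
    refine ⟨?_, ?_⟩
    · simp only [h𝓐, h𝓑, Finset.mem_filter, Finset.mem_powerset, hfs]
      refine ⟨⟨Finset.filter_subset _ _, by rw [hco]; exact hch.1⟩, ?_⟩
      rw [← finsum_mem_coe_finset, hco]
      exact hch.2.1
    · rw [hfs, hco]; exact hch.2.2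
  -- fiberwise counting
  set S : ℕ := ∑ i ∈ Finset.range (F.card + 1), r.choose i * (E.card - r).choose i with hSdef
  have hkey : 𝓑.card ≤ 𝓐.card * S := by
    rw [Finset.card_eq_sum_card_fiberwise (fun s hs => (hfspec s hs).1)]
    refine le_trans (Finset.sum_le_sum ?_) (by rw [Finset.sum_const, smul_eq_mul])
    intro t ht
    have ht𝓑 : t ∈ 𝓑 := Finset.mem_of_mem_filter _ ht
    obtain ⟨htE, htc, htb⟩ := hmem𝓑 t ht𝓑
    refine count_close E t htE F.card r htc _ ?_
    intro s hs
    rw [Finset.mem_filter] at hs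
    obtain ⟨hs𝓑, hst⟩ := hs
    obtain ⟨hsE, hsc, hsb⟩ := hmem𝓑 s hs𝓑
    refine ⟨hsE, hsc, ?_⟩
    have := (hfspec s hs𝓑).2
    rw [hst] at this
    rwa [← Finset.coe_sdiff, Set.ncard_coe_finset] at this
  -- conclude over ℝ
  have hSpos : (0:ℝ) < ∑ i ∈ Finset.range (F.card + 1),
      (r.choose i : ℝ) * ((M.E.ncard - r).choose i : ℝ) := by
    refine Finset.sum_pos' (fun i _ => by positivity) ⟨0, Finset.mem_range.mpr (by omega), ?_⟩
    norm_num
  rw [ge_iff_le, div_le_iff₀ hSpos, hcardA, hcardB]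
  have : ((∑ i ∈ Finset.range (F.card + 1),
      (r.choose i : ℝ) * ((M.E.ncard - r).choose i : ℝ))) = (S : ℝ) := by
    rw [hSdef, hEcard]
    push_cast
    rfl
  rw [this]
  exact_mod_cast hkey
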